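/- Let G : ℝ² → (real symmetric 4×4 matrices) be continuously differentiable with G(y) invertible for every y, with pointwise inverse g(y) = G(y)⁻¹, and let W : ℝ² → ℝ be continuously differentiable. Let x : ℝ → ℝ⁴ and p : ℝ → ℝ⁴ be differentiable curves satisfying ẋ^μ(s) = Σ_σ G^{μσ}(x²(s),x³(s)) p_σ(s) for μ = 0,1,2,3, ṗ₀(s) = ṗ₁(s) = 0, and ṗ_i(s) = −(1/2)(Σ_{ρ,σ} ∂_i G^{ρσ}(x²(s),x³(s)) p_ρ(s) p_σ(s) + ∂_i W(x²(s),x³(s))) for i = 2,3. Suppose at s = s₀: ẋ²(s₀) = ẋ³(s₀) = 0, the constraint Σ_{ρ,σ} G^{ρσ} p_ρ p_σ + W = 0 holds, and at y₀ = (x²(s₀),x³(s₀)) the components a = g₀₀(y₀), b = g₀₁(y₀), c = g₁₁(y₀) satisfy a ≠ 0, b² − a c > 0 and p₀(s₀)² + W(y₀)·a > 0. Then ẋ¹(s₀) ≠ 0 and, with ε = 1 if ẋ¹(s₀) > 0 and ε = −1 if ẋ¹(s₀) < 0, the second derivative ẍ^μ(s₀) exists and equals −[√(p₀(s₀)² +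 W(y₀) a)/√(b² − a c)] · Σ_{i=2,3} G^{μi}(y₀) ∂_i Ψ(y₀), where Ψ(y) = −ε (g₀₁(y)/g₀₀(y)) p₀(s₀) + (1/g₀₀(y)) √(g₀₁(y)² − g₀₀(y) g₁₁(y)) √(p₀(s₀)² + W(y) g₀₀(y)). -/

import Mathlib

open Real Filter

/-- Partial derivative with respect to the first coordinate of `ℝ²`
(i.e. the coordinate `x²` of spacetime). -/
noncomputable def pd1 (f : ℝ × ℝ → ℝ) (y : ℝ × ℝ) : ℝ := fderiv ℝ f y (1, 0)

/-- Partial derivative with respect to the second coordinate of `ℝ²`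
(i.e. the coordinate `x³` of spacetime). -/
noncomputable def pd2 (f : ℝ × ℝ → ℝ) (y : ℝ × ℝ) : ℝ := fderiv ℝ f y (0, 1)

open Matrix

lemma differentiableAt_det {ι : Type*} [Fintype ι] [DecidableEq ι]
    {M : ℝ × ℝ → Matrix ι ι ℝ} {y : ℝ × ℝ}
    (h : ∀ i j, DifferentiableAt ℝ (fun z => M z i j) y) :
    DifferentiableAt ℝ (fun z => (M z).det) y := by
  simp only [Matrix.det_apply']
  classical
  refine DifferentiableAt.fun_sum fun σ _ => DifferentiableAt.const_mul ?_ _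
  exact (HasFDerivAt.finset_prod (u := Finset.univ)
    (g := fun i z => M z (σ i) i)
    (g' := fun i => fderiv ℝ (fun z => M z (σ i) i) y)
    (fun i _ => (h (σ i) i).hasFDerivAt)).differentiableAt

lemma differentiableAt_inv_entry {M : ℝ × ℝ → Matrix (Fin 4) (Fin 4) ℝ} {y : ℝ × ℝ}
    (h : ∀ i j, DifferentiableAt ℝ (fun z => M z i j) y)
    (hdet : (M y).det ≠ 0) (i j : Fin 4) :
    DifferentiableAt ℝ (fun z => (M z)⁻¹ i j) y := by
  have hfun : (fun z => (M z)⁻¹ i j)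
      = fun z => ((M z).det)⁻¹ * (M z).adjugate i j := by
    funext z
    rw [Matrix.inv_def, Matrix.smul_apply, Ring.inverse_eq_inv', smul_eq_mul]
  rw [hfun]
  have hdetD : DifferentiableAt ℝ (fun z => (M z).det) y := differentiableAt_det h
  have hadj : DifferentiableAt ℝ (fun z => (M z).adjugate i j) y := by
    have : (fun z => (M z).adjugate i j)
        = fun z => ((M z).updateRow j (Pi.single i 1)).det := by
      funext z; rw [Matrix.adjugate_apply]
    rw [this]
    refine differentiableAt_det fun k l => ?_
    rcases eq_or_ne k j with hk | hk
    · simp only [hk, Matrix.updateRow_apply, if_pos rfl]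
      exact differentiableAt_const _
    · simp only [Matrix.updateRow_apply, if_neg hk]
      exact h k l
  exact (hdetD.inv hdet).mul hadj

lemma alg_key (a b c u v W q0 S1 S2 ε da db dc dW dψ : ℝ)
    (ha : a ≠ 0) (hq0 : q0 = a*u + b*v) (hW : W = -(a*u^2 + 2*b*u*v + c*v^2))
    (hS1 : 0 < S1) (hS1sq : S1^2 = b^2 - a*c) (hS2 : 0 < S2) (hS2v : S2 = ε*v*S1)
    (hε : ε = 1 ∨ ε = -1)
    (hdψ : dψ = (ε*q0*b/a^2 - S1*S2/a^2 - c*S2/(2*a*S1) + S1*W/(2*a*S2))*da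
      + (-(ε*q0)/a + b*S2/(a*S1))*db + (-(S2/(2*S1)))*dc + (S1/(2*S2))*dW) :
    -(1/2) * (-(u^2*da + 2*u*v*db + v^2*dc) + dW) = -(S2/S1) * dψ := by
  have hS1ne : S1 ≠ 0 := ne_of_gt hS1
  have hS2ne : S2 ≠ 0 := ne_of_gt hS2
  have hv : v ≠ 0 := by
    rintro rfl; rw [hS2v] at hS2; simp at hS2
  subst hdψ hq0 hW
  rcases hε with rfl | rfl <;> rw [hS2v] at hS2ne ⊢ <;> field_simp <;> ring_nf
  · linear_combination (-2*da*v^2) * hS1sq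
  · linear_combination (-2*da*v^2) * hS1sq

lemma psi_fderiv (fa fb fc fW : ℝ × ℝ → ℝ) (y₀ : ℝ × ℝ) (q0 ε : ℝ)
    (hfa : DifferentiableAt ℝ fa y₀) (hfb : DifferentiableAt ℝ fb y₀)
    (hfc : DifferentiableAt ℝ fc y₀) (hfW : DifferentiableAt ℝ fW y₀)
    (hA : fa y₀ ≠ 0)
    (h1 : 0 < fb y₀ * fb y₀ - fa y₀ * fc y₀)
    (h2 : 0 < q0 ^ 2 + fW y₀ * fa y₀) :
    ∃ L : ℝ × ℝ →L[ℝ] ℝ,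
      HasFDerivAt (fun y => -ε * (fb y * (fa y)⁻¹) * q0
        + (fa y)⁻¹ * Real.sqrt (fb y * fb y - fa y * fc y)
          * Real.sqrt (q0 ^ 2 + fW y * fa y)) L y₀ ∧
      ∀ w : ℝ × ℝ, L w =
        (ε * q0 * fb y₀ / (fa y₀)^2
          - Real.sqrt (fb y₀ * fb y₀ - fa y₀ * fc y₀) * Real.sqrt (q0^2 + fW y₀ * fa y₀) / (fa y₀)^2
          - fc y₀ * Real.sqrt (q0^2 + fW y₀ * fa y₀) / (2 * fa y₀ * Real.sqrt (fb y₀ * fb y₀ - fa y₀ * fc y₀))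
          + Real.sqrt (fb y₀ * fb y₀ - fa y₀ * fc y₀) * fW y₀ / (2 * fa y₀ * Real.sqrt (q0^2 + fW y₀ * fa y₀))) * fderiv ℝ fa y₀ w
        + (-(ε * q0) / fa y₀
          + fb y₀ * Real.sqrt (q0^2 + fW y₀ * fa y₀) / (fa y₀ * Real.sqrt (fb y₀ * fb y₀ - fa y₀ * fc y₀))) * fderiv ℝ fb y₀ w
        + (-(Real.sqrt (q0^2 + fW y₀ * fa y₀) / (2 * Real.sqrt (fb y₀ * fb y₀ - fa y₀ * fc y₀)))) * fderiv ℝ fc y₀ w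
        + (Real.sqrt (fb y₀ * fb y₀ - fa y₀ * fc y₀) / (2 * Real.sqrt (q0^2 + fW y₀ * fa y₀))) * fderiv ℝ fW y₀ w := by
  have hfa' := hfa.hasFDerivAt
  have hfb' := hfb.hasFDerivAt
  have hfc' := hfc.hasFDerivAt
  have hfW' := hfW.hasFDerivAt
  have hIa : HasFDerivAt (fun y => (fa y)⁻¹)
      ((-((fa y₀) ^ 2)⁻¹) • fderiv ℝ fa y₀) y₀ :=
    (hasDerivAt_inv hA).comp_hasFDerivAt y₀ hfa'
  have hr1 : HasFDerivAt (fun y => fb y * fb y - fa y * fc y)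
      ((fb y₀ • fderiv ℝ fb y₀ + fb y₀ • fderiv ℝ fb y₀)
        - (fa y₀ • fderiv ℝ fc y₀ + fc y₀ • fderiv ℝ fa y₀)) y₀ :=
    (hfb'.mul hfb').sub (hfa'.mul hfc')
  have hr2 : HasFDerivAt (fun y => q0 ^ 2 + fW y * fa y)
      (0 + (fW y₀ • fderiv ℝ fa y₀ + fa y₀ • fderiv ℝ fW y₀)) y₀ :=
    (hasFDerivAt_const (q0 ^ 2) y₀).add (hfW'.mul hfa')
  have hs1 := hr1.sqrt (ne_of_gt h1)
  have hs2 := hr2.sqrt (ne_of_gt h2)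
  have ht1 := ((hfb'.mul hIa).const_mul (-ε)).mul_const q0
  have ht2 := (hIa.mul hs1).mul hs2
  refine ⟨_, ht1.add ht2, ?_⟩
  intro w
  have hS1 : Real.sqrt (fb y₀ * fb y₀ - fa y₀ * fc y₀) ≠ 0 :=
    ne_of_gt (Real.sqrt_pos.2 h1)
  have hS2 : Real.sqrt (q0 ^ 2 + fW y₀ * fa y₀) ≠ 0 :=
    ne_of_gt (Real.sqrt_pos.2 h2)
  simp only [ContinuousLinearMap.add_apply, ContinuousLinearMap.coe_smul',
    Pi.smul_apply, smul_eq_mul, ContinuousLinearMap.zero_apply,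
    ContinuousLinearMap.coe_sub', Pi.sub_apply, Pi.mul_apply]
  have hq1 : Real.sqrt (fb y₀ ^ 2 - fa y₀ * fc y₀) ^ 2 = fb y₀ ^ 2 - fa y₀ * fc y₀ :=
    Real.sq_sqrt (by rw [pow_two]; exact h1.le)
  have hq2 : Real.sqrt (q0 ^ 2 + fa y₀ * fW y₀) ^ 2 = q0 ^ 2 + fa y₀ * fW y₀ :=
    Real.sq_sqrt (by rw [mul_comm]; exact h2.le)
  have hS1' : Real.sqrt (fb y₀ ^ 2 - fa y₀ * fc y₀) ≠ 0 := by rw [pow_two]; exact hS1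
  have hS2' : Real.sqrt (q0 ^ 2 + fa y₀ * fW y₀) ≠ 0 := by rw [mul_comm]; exact hS2
  field_simp
  ring

lemma contract_key
    (G : ℝ × ℝ → Matrix (Fin 4) (Fin 4) ℝ) (y₀ : ℝ × ℝ)
    (hGd : ∀ i j, DifferentiableAt ℝ (fun y => G y i j) y₀)
    (hGsymm : ∀ y, (G y).IsSymm) (hGinv : ∀ y, IsUnit (G y).det)
    (g : ℝ × ℝ → Matrix (Fin 4) (Fin 4) ℝ) (hg : ∀ y, g y = (G y)⁻¹)
    (q : Fin 4 → ℝ) (X : Fin 4 → ℝ) (hX : X = (G y₀) *ᵥ q)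
    (hX2 : X 2 = 0) (hX3 : X 3 = 0) (w : ℝ × ℝ) :
    ∑ ρ : Fin 4, ∑ σ : Fin 4, fderiv ℝ (fun y => G y ρ σ) y₀ w * q ρ * q σ
      = -(X 0 ^ 2 * fderiv ℝ (fun y => g y 0 0) y₀ w
        + 2 * X 0 * X 1 * fderiv ℝ (fun y => g y 0 1) y₀ w
        + X 1 ^ 2 * fderiv ℝ (fun y => g y 1 1) y₀ w) := by
  classical
  have hdet : (G y₀).det ≠ 0 := (hGinv y₀).ne_zero
  have hgd : ∀ i j, DifferentiableAt ℝ (fun y => g y i j) y₀ := by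
    intro i j
    have : (fun y => g y i j) = fun y => (G y)⁻¹ i j := funext fun y => by rw [hg]
    rw [this]
    exact differentiableAt_inv_entry hGd hdet i j
  have hgs : ∀ y, (g y)ᵀ = g y := by
    intro y
    rw [hg, Matrix.transpose_nonsing_inv, (hGsymm y).eq]
  have hrel : ∀ μ ν : Fin 4, ∑ σ : Fin 4,
      (g y₀ μ σ * fderiv ℝ (fun y => G y σ ν) y₀ w
        + G y₀ σ ν * fderiv ℝ (fun y => g y μ σ) y₀ w) = 0 := by
    intro μ ν
    have hsum : HasFDerivAt (fun y => ∑ σ : Fin 4, g y μ σ * G y σ ν)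
        (∑ σ : Fin 4, (g y₀ μ σ • fderiv ℝ (fun y => G y σ ν) y₀
          + G y₀ σ ν • fderiv ℝ (fun y => g y μ σ) y₀)) y₀ :=
      HasFDerivAt.fun_sum fun σ _ => ((hgd μ σ).hasFDerivAt.mul (hGd σ ν).hasFDerivAt)
    have hconstfun : (fun y => ∑ σ : Fin 4, g y μ σ * G y σ ν)
        = fun _ => (1 : Matrix (Fin 4) (Fin 4) ℝ) μ ν := by
      funext y
      rw [← Matrix.mul_apply, hg, Matrix.nonsing_inv_mul _ (hGinv y)]
    have h0 : HasFDerivAt (fun y => ∑ σ : Fin 4, g y μ σ * G y σ ν)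
        (0 : ℝ × ℝ →L[ℝ] ℝ) y₀ := by
      rw [hconstfun]; exact hasFDerivAt_const _ _
    have huni := hsum.unique h0
    calc (∑ σ : Fin 4, (g y₀ μ σ * fderiv ℝ (fun y => G y σ ν) y₀ w
          + G y₀ σ ν * fderiv ℝ (fun y => g y μ σ) y₀ w))
        = (∑ σ : Fin 4, (g y₀ μ σ • fderiv ℝ (fun y => G y σ ν) y₀
          + G y₀ σ ν • fderiv ℝ (fun y => g y μ σ) y₀)) w := by
          rw [ContinuousLinearMap.sum_apply]
          exact Finset.sum_congr rfl fun σ _ => by simp [smul_eq_mul]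
      _ = 0 := by rw [huni]; rfl
  set Dm : Matrix (Fin 4) (Fin 4) ℝ :=
    Matrix.of fun ρ σ => fderiv ℝ (fun y => G y ρ σ) y₀ w with hDm
  set dgm : Matrix (Fin 4) (Fin 4) ℝ :=
    Matrix.of fun μ ν => fderiv ℝ (fun y => g y μ ν) y₀ w with hdgm
  have h1 : dgm * G y₀ = -(g y₀ * Dm) := by
    ext μ ν
    have := hrel μ ν
    simp only [Fin.sum_univ_four] at this
    simp only [Matrix.mul_apply, Matrix.neg_apply, Fin.sum_univ_four, hdgm, hDm,
      Matrix.of_apply]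
    linarith
  have h2 : dgm = -(g y₀ * Dm * g y₀) := by
    calc dgm = dgm * (G y₀ * g y₀) := by
          rw [hg, Matrix.mul_nonsing_inv _ (hGinv y₀), Matrix.mul_one]
      _ = (dgm * G y₀) * g y₀ := by rw [Matrix.mul_assoc]
      _ = -(g y₀ * Dm) * g y₀ := by rw [h1]
      _ = -(g y₀ * Dm * g y₀) := by rw [Matrix.neg_mul]
  have hgX : g y₀ *ᵥ X = q := by
    rw [hX, Matrix.mulVec_mulVec, hg, Matrix.nonsing_inv_mul _ (hGinv y₀),
      Matrix.one_mulVec]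
  have hvm : X ᵥ* g y₀ = q := by
    rw [← Matrix.mulVec_transpose, hgs, hgX]
  have e1 : X ⬝ᵥ (dgm *ᵥ X) = -(q ⬝ᵥ (Dm *ᵥ q)) := by
    rw [h2, Matrix.neg_mulVec, dotProduct_neg, Matrix.mul_assoc,
      ← Matrix.mulVec_mulVec, Matrix.dotProduct_mulVec, hvm,
      ← Matrix.mulVec_mulVec, hgX]
  have eD : q ⬝ᵥ (Dm *ᵥ q)
      = ∑ ρ : Fin 4, ∑ σ : Fin 4, fderiv ℝ (fun y => G y ρ σ) y₀ w * q ρ * q σ := by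
    simp only [dotProduct, Matrix.mulVec, Fin.sum_univ_four, hDm,
      Matrix.of_apply]
    ring
  have hg10 : fderiv ℝ (fun y => g y 1 0) y₀ w = fderiv ℝ (fun y => g y 0 1) y₀ w := by
    have : (fun y => g y 1 0) = (fun y => g y 0 1) := by
      funext y
      nth_rewrite 1 [← hgs y]
      rw [Matrix.transpose_apply]
    rw [this]
  have edg : X ⬝ᵥ (dgm *ᵥ X)
      = X 0 ^ 2 * fderiv ℝ (fun y => g y 0 0) y₀ w
        + 2 * X 0 * X 1 * fderiv ℝ (fun y => g y 0 1) y₀ w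
        + X 1 ^ 2 * fderiv ℝ (fun y => g y 1 1) y₀ w := by
    simp only [dotProduct, Matrix.mulVec, Fin.sum_univ_four, hdgm,
      Matrix.of_apply, hX2, hX3, hg10]
    ring
  rw [← eD, ← edg, e1, neg_neg]

/-- Along a solution of Hamilton's equations for light rays in a plasma on a stationary
axisymmetric spacetime, at a parameter value where `ẋ² = ẋ³ = 0` one has `ẋ¹ ≠ 0` and
the second derivative `ẍ^μ` equals a negative multiple of `Σ_i G^{μi} ∂_i Ψ`,
where `Ψ` is the potential built from the sign of `ẋ¹`. -/
theorem stmt3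
    (G : ℝ × ℝ → Matrix (Fin 4) (Fin 4) ℝ)
    (hGC1 : ∀ μ ν : Fin 4, ContDiff ℝ 1 (fun y => G y μ ν))
    (hGsymm : ∀ y, (G y).IsSymm)
    (hGinv : ∀ y, IsUnit (G y).det)
    (g : ℝ × ℝ → Matrix (Fin 4) (Fin 4) ℝ)
    (hg : ∀ y, g y = (G y)⁻¹)
    (W : ℝ × ℝ → ℝ) (hWC1 : ContDiff ℝ 1 W)
    (x p : ℝ → Fin 4 → ℝ)
    (hx : ∀ (s : ℝ) (μ : Fin 4), HasDerivAt (fun t => x t μ)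
        (∑ σ : Fin 4, G (x s 2, x s 3) μ σ * p s σ) s)
    (hp0 : ∀ s : ℝ, HasDerivAt (fun t => p t 0) 0 s)
    (hp1 : ∀ s : ℝ, HasDerivAt (fun t => p t 1) 0 s)
    (hp2 : ∀ s : ℝ, HasDerivAt (fun t => p t 2)
        (-(1/2) * ((∑ ρ : Fin 4, ∑ σ : Fin 4,
            pd1 (fun y => G y ρ σ) (x s 2, x s 3) * p s ρ * p s σ)
          + pd1 W (x s 2, x s 3))) s)
    (hp3 : ∀ s : ℝ, HasDerivAt (fun t => p t 3)
        (-(1/2) * ((∑ ρ : Fin 4, ∑ σ : Fin 4,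
            pd2 (fun y => G y ρ σ) (x s 2, x s 3) * p s ρ * p s σ)
          + pd2 W (x s 2, x s 3))) s)
    (s₀ : ℝ)
    (hx2 : deriv (fun t => x t 2) s₀ = 0)
    (hx3 : deriv (fun t => x t 3) s₀ = 0)
    (y₀ : ℝ × ℝ) (hy₀ : y₀ = (x s₀ 2, x s₀ 3))
    (hconstraint : (∑ ρ : Fin 4, ∑ σ : Fin 4, G y₀ ρ σ * p s₀ ρ * p s₀ σ) + W y₀ = 0)
    (a b c : ℝ)
    (hav : a = g y₀ 0 0) (hbv : b = g y₀ 0 1) (hcv : c = g y₀ 1 1)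
    (ha : a ≠ 0) (hdet : 0 < b ^ 2 - a * c)
    (hpos : 0 < (p s₀ 0) ^ 2 + W y₀ * a)
    (ε : ℝ) (hε : ε = if 0 < deriv (fun t => x t 1) s₀ then 1 else -1)
    (Ψ : ℝ × ℝ → ℝ)
    (hΨ : ∀ y, Ψ y = -ε * (g y 0 1 / g y 0 0) * p s₀ 0
        + (1 / g y 0 0) * Real.sqrt ((g y 0 1) ^ 2 - g y 0 0 * g y 1 1)
          * Real.sqrt ((p s₀ 0) ^ 2 + W y * g y 0 0)) :
    deriv (fun t => x t 1) s₀ ≠ 0 ∧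
    ∀ μ : Fin 4, HasDerivAt (deriv (fun t => x t μ))
      (-(Real.sqrt ((p s₀ 0) ^ 2 + W y₀ * a) / Real.sqrt (b ^ 2 - a * c)) *
        (G y₀ μ 2 * pd1 Ψ y₀ + G y₀ μ 3 * pd2 Ψ y₀)) s₀ := by
  have hdet0 : ∀ y, (G y).det ≠ 0 := fun y => (hGinv y).ne_zero
  have hGd : ∀ (y : ℝ × ℝ) (i j : Fin 4), DifferentiableAt ℝ (fun z => G z i j) y :=
    fun y i j => ((hGC1 i j).differentiable one_ne_zero).differentiableAt
  have hgd : ∀ (y : ℝ × ℝ) (i j : Fin 4), DifferentiableAt ℝ (fun z => g z i j) y := by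
    intro y i j
    have hfun : (fun z => g z i j) = fun z => (G z)⁻¹ i j := funext fun z => by rw [hg]
    rw [hfun]; exact differentiableAt_inv_entry (hGd y) (hdet0 y) i j
  have hgs : ∀ y, (g y)ᵀ = g y := fun y => by
    rw [hg, Matrix.transpose_nonsing_inv, (hGsymm y).eq]
  set X : Fin 4 → ℝ := (G y₀) *ᵥ (p s₀) with hXdef
  have hXa : ∀ ρ, X ρ = ∑ σ : Fin 4, G y₀ ρ σ * p s₀ σ := by
    intro ρ; simp [hXdef, Matrix.mulVec, dotProduct]
  have hderiv : ∀ μ : Fin 4, deriv (fun t => x t μ) s₀ = X μ := by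
    intro μ; rw [(hx s₀ μ).deriv, ← hy₀, hXa]
  have hX2 : X 2 = 0 := by rw [← hderiv 2]; exact hx2
  have hX3 : X 3 = 0 := by rw [← hderiv 3]; exact hx3
  have hgX : g y₀ *ᵥ X = p s₀ := by
    rw [hXdef, Matrix.mulVec_mulVec, hg, Matrix.nonsing_inv_mul _ (hGinv y₀),
      Matrix.one_mulVec]
  have hg10 : g y₀ 1 0 = g y₀ 0 1 := by
    nth_rewrite 1 [← hgs y₀]
    rw [Matrix.transpose_apply]
  have hq0' : p s₀ 0 = a * X 0 + b * X 1 := by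
    conv_lhs => rw [← hgX]
    simp [Matrix.mulVec, dotProduct, Fin.sum_univ_four, hX2, hX3, ← hav, ← hbv]
  have hq1' : p s₀ 1 = b * X 0 + c * X 1 := by
    conv_lhs => rw [← hgX]
    simp [Matrix.mulVec, dotProduct, Fin.sum_univ_four, hX2, hX3, hg10,
      ← hbv, ← hcv]
  have hsplit : (∑ ρ : Fin 4, ∑ σ : Fin 4, G y₀ ρ σ * p s₀ ρ * p s₀ σ)
      = p s₀ 0 * X 0 + p s₀ 1 * X 1 := by
    have h1 : ∀ ρ : Fin 4, (∑ σ : Fin 4, G y₀ ρ σ * p s₀ ρ * p s₀ σ) = p s₀ ρ * X ρ := by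
      intro ρ
      rw [hXa ρ, Finset.mul_sum]
      exact Finset.sum_congr rfl fun σ _ => by ring
    calc (∑ ρ : Fin 4, ∑ σ : Fin 4, G y₀ ρ σ * p s₀ ρ * p s₀ σ)
        = ∑ ρ : Fin 4, p s₀ ρ * X ρ := Finset.sum_congr rfl fun ρ _ => h1 ρ
      _ = p s₀ 0 * X 0 + p s₀ 1 * X 1 := by
          rw [Fin.sum_univ_four, hX2, hX3]; ring
  have hW' : W y₀ = -(a * X 0 ^ 2 + 2 * b * X 0 * X 1 + c * X 1 ^ 2) := by
    have hcc := hconstraint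
    rw [hsplit] at hcc
    linear_combination hcc - X 0 * hq0' - X 1 * hq1'
  have hv2 : (b ^ 2 - a * c) * X 1 ^ 2 = p s₀ 0 ^ 2 + W y₀ * a := by
    linear_combination (-(p s₀ 0 + a * X 0 + b * X 1)) * hq0' + (-a) * hW'
  have hvne : X 1 ≠ 0 := by
    intro h
    rw [h] at hv2
    simp at hv2
    linarith
  rw [hderiv 1] at hε
  have hεpm : ε = 1 ∨ ε = -1 := by rw [hε]; split_ifs <;> simp
  have hεv : 0 < ε * X 1 := by
    rcases lt_trichotomy (X 1) 0 with h | h | h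
    · rw [hε, if_neg (by linarith)]; nlinarith
    · exact absurd h hvne
    · rw [hε, if_pos h]; nlinarith
  have hS1pos : 0 < Real.sqrt (b ^ 2 - a * c) := Real.sqrt_pos.2 hdet
  have hS2pos : 0 < Real.sqrt (p s₀ 0 ^ 2 + W y₀ * a) := Real.sqrt_pos.2 hpos
  have hS1sq : Real.sqrt (b ^ 2 - a * c) ^ 2 = b ^ 2 - a * c := Real.sq_sqrt hdet.le
  have hε2 : ε ^ 2 = 1 := by rcases hεpm with rfl | rfl <;> norm_num
  have hS2v : Real.sqrt (p s₀ 0 ^ 2 + W y₀ * a)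
      = ε * X 1 * Real.sqrt (b ^ 2 - a * c) := by
    have hsq : p s₀ 0 ^ 2 + W y₀ * a
        = (ε * X 1 * Real.sqrt (b ^ 2 - a * c)) ^ 2 := by
      linear_combination (-1) * hv2
        + (-(X 1 ^ 2 * Real.sqrt (b ^ 2 - a * c) ^ 2)) * hε2
        + (-(X 1 ^ 2)) * hS1sq
    rw [hsq, Real.sqrt_sq (mul_pos hεv hS1pos).le]
  -- Ψ derivative
  have hΨeq : Ψ = (fun y => -ε * (g y 0 1 * (g y 0 0)⁻¹) * p s₀ 0
      + (g y 0 0)⁻¹ * Real.sqrt (g y 0 1 * g y 0 1 - g y 0 0 * g y 1 1)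
        * Real.sqrt (p s₀ 0 ^ 2 + W y * g y 0 0)) := by
    funext y
    rw [hΨ y, div_eq_mul_inv, one_div, pow_two (g y 0 1)]
  have hA0 : g y₀ 0 0 ≠ 0 := by rw [← hav]; exact ha
  have hr1pos : 0 < g y₀ 0 1 * g y₀ 0 1 - g y₀ 0 0 * g y₀ 1 1 := by
    rw [← hav, ← hbv, ← hcv]; nlinarith [hdet]
  have hr2pos : 0 < p s₀ 0 ^ 2 + W y₀ * g y₀ 0 0 := by rw [← hav]; exact hpos
  obtain ⟨L, hL, hLval⟩ := psi_fderiv (fun y => g y 0 0) (fun y => g y 0 1)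
    (fun y => g y 1 1) W y₀ (p s₀ 0) ε (hgd y₀ 0 0) (hgd y₀ 0 1) (hgd y₀ 1 1)
    ((hWC1.differentiable one_ne_zero).differentiableAt) hA0 hr1pos hr2pos
  have hΨL : HasFDerivAt Ψ L y₀ := by rw [hΨeq]; exact hL
  have hpdL1 : pd1 Ψ y₀ = L (1, 0) := by simp only [pd1]; rw [hΨL.fderiv]
  have hpdL2 : pd2 Ψ y₀ = L (0, 1) := by simp only [pd2]; rw [hΨL.fderiv]
  have hLw : ∀ w : ℝ × ℝ, L w =
      (ε * p s₀ 0 * b / a ^ 2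
        - Real.sqrt (b ^ 2 - a * c) * Real.sqrt (p s₀ 0 ^ 2 + W y₀ * a) / a ^ 2
        - c * Real.sqrt (p s₀ 0 ^ 2 + W y₀ * a) / (2 * a * Real.sqrt (b ^ 2 - a * c))
        + Real.sqrt (b ^ 2 - a * c) * W y₀ / (2 * a * Real.sqrt (p s₀ 0 ^ 2 + W y₀ * a)))
          * fderiv ℝ (fun y => g y 0 0) y₀ w
      + (-(ε * p s₀ 0) / a
        + b * Real.sqrt (p s₀ 0 ^ 2 + W y₀ * a) / (a * Real.sqrt (b ^ 2 - a * c)))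
          * fderiv ℝ (fun y => g y 0 1) y₀ w
      + (-(Real.sqrt (p s₀ 0 ^ 2 + W y₀ * a) / (2 * Real.sqrt (b ^ 2 - a * c))))
          * fderiv ℝ (fun y => g y 1 1) y₀ w
      + (Real.sqrt (b ^ 2 - a * c) / (2 * Real.sqrt (p s₀ 0 ^ 2 + W y₀ * a)))
          * fderiv ℝ W y₀ w := by
    intro w
    rw [hLval w]
    simp only [← hav, ← hbv, ← hcv]
    rw [show b * b = b ^ 2 from (pow_two b).symm]
  have hkey1 : -(1/2) * ((∑ ρ : Fin 4, ∑ σ : Fin 4,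
        pd1 (fun y => G y ρ σ) y₀ * p s₀ ρ * p s₀ σ) + pd1 W y₀)
      = -(Real.sqrt (p s₀ 0 ^ 2 + W y₀ * a) / Real.sqrt (b ^ 2 - a * c)) * pd1 Ψ y₀ := by
    have hcontract := contract_key G y₀ (hGd y₀) hGsymm hGinv g hg (p s₀) X hXdef
      hX2 hX3 (1, 0)
    have hsum : (∑ ρ : Fin 4, ∑ σ : Fin 4,
        pd1 (fun y => G y ρ σ) y₀ * p s₀ ρ * p s₀ σ)
        = -(X 0 ^ 2 * fderiv ℝ (fun y => g y 0 0) y₀ (1, 0)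
          + 2 * X 0 * X 1 * fderiv ℝ (fun y => g y 0 1) y₀ (1, 0)
          + X 1 ^ 2 * fderiv ℝ (fun y => g y 1 1) y₀ (1, 0)) := by
      simp only [pd1]; exact hcontract
    have halg := alg_key a b c (X 0) (X 1) (W y₀) (p s₀ 0)
      (Real.sqrt (b ^ 2 - a * c)) (Real.sqrt (p s₀ 0 ^ 2 + W y₀ * a)) ε
      (fderiv ℝ (fun y => g y 0 0) y₀ (1, 0)) (fderiv ℝ (fun y => g y 0 1) y₀ (1, 0))
      (fderiv ℝ (fun y => g y 1 1) y₀ (1, 0)) (fderiv ℝ W y₀ (1, 0)) (pd1 Ψ y₀)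
      ha hq0' hW' hS1pos hS1sq hS2pos hS2v hεpm (by rw [hpdL1, hLw (1, 0)])
    rw [hsum]
    have hpdW : pd1 W y₀ = fderiv ℝ W y₀ (1, 0) := rfl
    rw [hpdW]
    exact halg
  have hkey2 : -(1/2) * ((∑ ρ : Fin 4, ∑ σ : Fin 4,
        pd2 (fun y => G y ρ σ) y₀ * p s₀ ρ * p s₀ σ) + pd2 W y₀)
      = -(Real.sqrt (p s₀ 0 ^ 2 + W y₀ * a) / Real.sqrt (b ^ 2 - a * c)) * pd2 Ψ y₀ := by
    have hcontract := contract_key G y₀ (hGd y₀) hGsymm hGinv g hg (p s₀) X hXdef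
      hX2 hX3 (0, 1)
    have hsum : (∑ ρ : Fin 4, ∑ σ : Fin 4,
        pd2 (fun y => G y ρ σ) y₀ * p s₀ ρ * p s₀ σ)
        = -(X 0 ^ 2 * fderiv ℝ (fun y => g y 0 0) y₀ (0, 1)
          + 2 * X 0 * X 1 * fderiv ℝ (fun y => g y 0 1) y₀ (0, 1)
          + X 1 ^ 2 * fderiv ℝ (fun y => g y 1 1) y₀ (0, 1)) := by
      simp only [pd2]; exact hcontract
    have halg := alg_key a b c (X 0) (X 1) (W y₀) (p s₀ 0)
      (Real.sqrt (b ^ 2 - a * c)) (Real.sqrt (p s₀ 0 ^ 2 + W y₀ * a)) ε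
      (fderiv ℝ (fun y => g y 0 0) y₀ (0, 1)) (fderiv ℝ (fun y => g y 0 1) y₀ (0, 1))
      (fderiv ℝ (fun y => g y 1 1) y₀ (0, 1)) (fderiv ℝ W y₀ (0, 1)) (pd2 Ψ y₀)
      ha hq0' hW' hS1pos hS1sq hS2pos hS2v hεpm (by rw [hpdL2, hLw (0, 1)])
    rw [hsum]
    have hpdW : pd2 W y₀ = fderiv ℝ W y₀ (0, 1) := rfl
    rw [hpdW]
    exact halg
  refine ⟨by rw [hderiv 1]; exact hvne, ?_⟩
  intro μ
  have hfd : deriv (fun t => x t μ)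
      = fun s => ∑ σ : Fin 4, G (x s 2, x s 3) μ σ * p s σ :=
    funext fun s => (hx s μ).deriv
  rw [hfd]
  have hx2' : HasDerivAt (fun t => x t 2) 0 s₀ := by
    have h0 : (∑ σ : Fin 4, G (x s₀ 2, x s₀ 3) 2 σ * p s₀ σ) = 0 := by
      rw [← (hx s₀ 2).deriv]; exact hx2
    exact h0 ▸ hx s₀ 2
  have hx3' : HasDerivAt (fun t => x t 3) 0 s₀ := by
    have h0 : (∑ σ : Fin 4, G (x s₀ 2, x s₀ 3) 3 σ * p s₀ σ) = 0 := by
      rw [← (hx s₀ 3).deriv]; exact hx3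
    exact h0 ▸ hx s₀ 3
  have hφ : HasDerivAt (fun t => ((x t 2, x t 3) : ℝ × ℝ)) ((0 : ℝ), (0 : ℝ)) s₀ :=
    hx2'.prodMk hx3'
  have hGt : ∀ σ : Fin 4, HasDerivAt (fun t => G (x t 2, x t 3) μ σ) 0 s₀ := by
    intro σ
    have hF : HasFDerivAt (fun y => G y μ σ)
        (fderiv ℝ (fun y => G y μ σ) y₀) (x s₀ 2, x s₀ 3) := by
      rw [← hy₀]; exact (hGd y₀ μ σ).hasFDerivAt
    have h := hF.comp_hasDerivAt s₀ hφ
    have hz : fderiv ℝ (fun y => G y μ σ) y₀ ((0 : ℝ), (0 : ℝ)) = 0 := by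
      have hzz : ((0 : ℝ), (0 : ℝ)) = (0 : ℝ × ℝ) := rfl
      rw [hzz, map_zero]
    rwa [hz] at h
  have P2def : HasDerivAt (fun t => p t 2)
      (-(1/2) * ((∑ ρ : Fin 4, ∑ σ : Fin 4,
        pd1 (fun y => G y ρ σ) y₀ * p s₀ ρ * p s₀ σ) + pd1 W y₀)) s₀ := by
    have h := hp2 s₀; rwa [← hy₀] at h
  have P3def : HasDerivAt (fun t => p t 3)
      (-(1/2) * ((∑ ρ : Fin 4, ∑ σ : Fin 4,
        pd2 (fun y => G y ρ σ) y₀ * p s₀ ρ * p s₀ σ) + pd2 W y₀)) s₀ := by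
    have h := hp3 s₀; rwa [← hy₀] at h
  set dp : Fin 4 → ℝ := ![0, 0,
      -(1/2) * ((∑ ρ : Fin 4, ∑ σ : Fin 4,
        pd1 (fun y => G y ρ σ) y₀ * p s₀ ρ * p s₀ σ) + pd1 W y₀),
      -(1/2) * ((∑ ρ : Fin 4, ∑ σ : Fin 4,
        pd2 (fun y => G y ρ σ) y₀ * p s₀ ρ * p s₀ σ) + pd2 W y₀)] with hdp
  have hpd : ∀ σ : Fin 4, HasDerivAt (fun t => p t σ) (dp σ) s₀ := by
    intro σ
    fin_cases σ
    · simpa [hdp] using hp0 s₀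
    · simpa [hdp] using hp1 s₀
    · simpa [hdp] using P2def
    · simpa [hdp] using P3def
  have hterm : ∀ σ : Fin 4, HasDerivAt (fun s => G (x s 2, x s 3) μ σ * p s σ)
      (0 * p s₀ σ + G (x s₀ 2, x s₀ 3) μ σ * dp σ) s₀ :=
    fun σ => (hGt σ).mul (hpd σ)
  have hsum : HasDerivAt (fun s => ∑ σ : Fin 4, G (x s 2, x s 3) μ σ * p s σ)
      (∑ σ : Fin 4, (0 * p s₀ σ + G (x s₀ 2, x s₀ 3) μ σ * dp σ)) s₀ :=
    HasDerivAt.fun_sum fun σ _ => hterm σ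
  have hval : (∑ σ : Fin 4, (0 * p s₀ σ + G (x s₀ 2, x s₀ 3) μ σ * dp σ))
      = -(Real.sqrt (p s₀ 0 ^ 2 + W y₀ * a) / Real.sqrt (b ^ 2 - a * c)) *
        (G y₀ μ 2 * pd1 Ψ y₀ + G y₀ μ 3 * pd2 Ψ y₀) := by
    rw [← hy₀]
    rw [Fin.sum_univ_four]
    simp only [hdp, Matrix.cons_val_zero, Matrix.cons_val_one, Matrix.head_cons,
      Matrix.cons_val_two, Matrix.tail_cons, Matrix.cons_val_three]
    rw [hkey1, hkey2]
    ring
  exact hval ▸ hsum
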